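/- arXiv:2211.01689 — 2 statements merged into one kernel-verified Lean document; each statement's English description precedes it below -/
import Mathlib

section
/- The automorphism group of the hypercube graph Q_d is isomorphic, as a group, to the semidirect product (ZMod 2)^d ⋊ Perm(Fin d), where Perm(Fin d) acts on the additive group (ZMod 2)^d = (Fin d → ZMod 2) by permuting coordinates. -/
/-- Hamming weight of a point of the Boolean cube `{0,1}^d`. -/
def wt {d : ℕ} (x : Fin d → ZMod 2) : ℕ :=
  (Finset.univ.filter (fun i => x i = 1)).card

/-- The hypercube graph `Q_d`. -/
def cubeGraph (d : ℕ) : SimpleGraph (Fin d → ZMod 2) where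
  Adj x y := wt (x + y) = 1
  symm := ⟨fun x y h => by (try dsimp only at h ⊢); rwa [add_comm] at h⟩
  loopless := ⟨fun x h => by
    try dsimp only at h
    have hx : x + x = 0 := by funext i; exact CharTwo.add_self_eq_zero (x i)
    rw [hx] at h
    simp [wt] at h⟩

/-- The coordinate-permutation action of a permutation `σ` on `(ZMod 2)^d`,
as a multiplicative automorphism of `Multiplicative (Fin d → ZMod 2)`. -/
def permMulAut {d : ℕ} (σ : Equiv.Perm (Fin d)) :
    Multiplicative (Fin d → ZMod 2) ≃* Multiplicative (Fin d → ZMod 2) where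
  toFun x := Multiplicative.ofAdd (fun i => Multiplicative.toAdd x (σ.symm i))
  invFun x := Multiplicative.ofAdd (fun i => Multiplicative.toAdd x (σ i))
  left_inv x := by
    funext i
    exact congrArg (Multiplicative.toAdd x) (σ.symm_apply_apply i)
  right_inv x := by
    funext i
    exact congrArg (Multiplicative.toAdd x) (σ.apply_symm_apply i)
  map_mul' x y := rfl

/-- The permutation group of coordinates acting on `(ZMod 2)^d` by permuting
coordinates, as a homomorphism into the automorphism group. -/
def permHom (d : ℕ) :
    Equiv.Perm (Fin d) →* MulAut (Multiplicative (Fin d → ZMod 2)) where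
  toFun := permMulAut
  map_one' := rfl
  map_mul' σ τ := rfl

namespace Cube

variable {d : ℕ}

lemma zmod2_cases (a : ZMod 2) : a = 0 ∨ a = 1 := by revert a; decide

lemma addSelf (v : Fin d → ZMod 2) : v + v = 0 := by
  funext i; exact CharTwo.add_self_eq_zero (v i)

lemma add_cancel {u v : Fin d → ZMod 2} (h : u + v = v) : u = 0 := by
  have := congrArg (· + v) h
  simpa [add_assoc, addSelf] using this

/-- basis vector -/
def e (i : Fin d) : Fin d → ZMod 2 := Pi.single i 1

lemma e_apply (i j : Fin d) : e i j = if j = i then 1 else 0 := Pi.single_apply i 1 j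

lemma e_apply_self (i : Fin d) : e i i = 1 := by simp [e_apply]

lemma e_inj {i j : Fin d} (h : e i = e j) : i = j := by
  have := congrFun h i
  rw [e_apply, e_apply, if_pos rfl] at this
  by_contra hne
  rw [if_neg hne] at this
  exact one_ne_zero this

lemma wt_eq_one_iff {u : Fin d → ZMod 2} : wt u = 1 ↔ ∃ i, u = e i := by
  constructor
  · intro h
    rw [wt, Finset.card_eq_one] at h
    obtain ⟨i, hi⟩ := h
    have hmem : ∀ j, u j = 1 ↔ j = i := by
      intro j
      rw [show (u j = 1) ↔ j ∈ Finset.univ.filter (fun k => u k = 1) from by simp, hi,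
        Finset.mem_singleton]
    refine ⟨i, funext fun j => ?_⟩
    rw [e_apply]
    by_cases hj : j = i
    · subst hj; simp [(hmem j).2 rfl]
    · simp only [if_neg hj]
      have h2 : u j ≠ 1 := fun hc => hj ((hmem j).1 hc)
      rcases zmod2_cases (u j) with h0 | h1
      · exact h0
      · exact absurd h1 h2
  · rintro ⟨i, rfl⟩
    rw [wt]
    have : Finset.univ.filter (fun j => e i j = 1) = {i} := by
      ext j
      simp only [Finset.mem_filter, Finset.mem_univ, true_and, Finset.mem_singleton, e_apply]
      constructor
      · intro hj
        by_contra hne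
        rw [if_neg hne] at hj
        exact one_ne_zero hj.symm
      · rintro rfl; simp
    rw [this]; simp

lemma wt_eq_zero_iff {u : Fin d → ZMod 2} : wt u = 0 ↔ u = 0 := by
  rw [wt, Finset.card_eq_zero, Finset.filter_eq_empty_iff]
  constructor
  · intro h
    funext j
    rcases zmod2_cases (u j) with h0 | h1
    · exact h0
    · exact absurd h1 (h (Finset.mem_univ j))
  · intro h j _
    rw [h]; simp

lemma adj_iff {x y : Fin d → ZMod 2} : (cubeGraph d).Adj x y ↔ wt (x + y) = 1 := Iff.rfl

lemma wt_add_e_lt {x : Fin d → ZMod 2} {i : Fin d} (hx : x i = 1) :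
    wt (x + e i) < wt x := by
  have hfe : Finset.univ.filter (fun j => (x + e i) j = 1) =
      (Finset.univ.filter (fun j => x j = 1)).erase i := by
    ext j
    simp only [Finset.mem_filter, Finset.mem_univ, true_and, Finset.mem_erase, Pi.add_apply,
      e_apply]
    by_cases hj : j = i
    · subst hj
      simp [hx]
    · simp [hj]
  rw [wt, wt, hfe]
  exact Finset.card_erase_lt_of_mem (by simp [hx])

lemma add_e_apply_ne {x : Fin d → ZMod 2} {i j : Fin d} (h : j ≠ i) :
    (x + e i) j = x j := by
  simp [e_apply, h]

end Cube

namespace Cube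

variable {d : ℕ}

/-- permutation action on coordinates -/
def pAct (σ : Equiv.Perm (Fin d)) (x : Fin d → ZMod 2) : Fin d → ZMod 2 :=
  fun i => x (σ.symm i)

lemma pAct_add (σ : Equiv.Perm (Fin d)) (x y : Fin d → ZMod 2) :
    pAct σ (x + y) = pAct σ x + pAct σ y := rfl

lemma wt_pAct (σ : Equiv.Perm (Fin d)) (x : Fin d → ZMod 2) :
    wt (pAct σ x) = wt x := by
  rw [wt, wt]
  apply Finset.card_bij (fun j _ => σ.symm j)
  · intro j hj
    simp only [Finset.mem_filter, Finset.mem_univ, true_and] at hj ⊢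
    exact hj
  · intro a _ b _ hab
    exact σ.symm.injective hab
  · intro b hb
    refine ⟨σ b, ?_, by simp⟩
    simp only [Finset.mem_filter, Finset.mem_univ, true_and] at hb ⊢
    simpa [pAct] using hb

lemma pAct_e (σ : Equiv.Perm (Fin d)) (i : Fin d) : pAct σ (e i) = e (σ i) := by
  funext j
  rw [pAct, e_apply, e_apply]
  congr 1
  simp only [eq_iff_iff]
  constructor
  · intro h; rw [← h]; simp
  · intro h; rw [h]; simp

/-- translation automorphism -/
def trAut (v : Fin d → ZMod 2) : cubeGraph d ≃g cubeGraph d where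
  toFun x := x + v
  invFun x := x + v
  left_inv x := by show x + v + v = x; rw [add_assoc, addSelf, add_zero]
  right_inv x := by show x + v + v = x; rw [add_assoc, addSelf, add_zero]
  map_rel_iff' := by
    intro x y
    show wt (x + v + (y + v)) = 1 ↔ wt (x + y) = 1
    have : x + v + (y + v) = x + y := by
      have : x + v + (y + v) = x + y + (v + v) := by abel
      rw [this, addSelf, add_zero]
    rw [this]

/-- coordinate-permutation automorphism -/
def pAut (σ : Equiv.Perm (Fin d)) : cubeGraph d ≃g cubeGraph d where
  toFun := pAct σ
  invFun x := fun i => x (σ i)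
  left_inv x := by funext i; simp [pAct]
  right_inv x := by funext i; simp [pAct]
  map_rel_iff' := by
    intro x y
    show wt (pAct σ x + pAct σ y) = 1 ↔ _
    rw [← pAct_add, wt_pAct]
    rfl

lemma trAut_apply (v x : Fin d → ZMod 2) : trAut v x = x + v := rfl
lemma pAut_apply (σ : Equiv.Perm (Fin d)) (x : Fin d → ZMod 2) : pAut σ x = pAct σ x := rfl

end Cube

namespace Cube

variable {d : ℕ}

lemma char2_rearrange {A B C D : Fin d → ZMod 2} (h : A + B = C + D) : A + C = B + D := by
  funext k
  have hk := congrFun h k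
  simp only [Pi.add_apply] at hk ⊢
  rcases zmod2_cases (A k) with hA | hA <;> rcases zmod2_cases (B k) with hB | hB <;>
    rcases zmod2_cases (C k) with hC | hC <;> rcases zmod2_cases (D k) with hD | hD <;>
    rw [hA, hB, hC, hD] at hk ⊢ <;> revert hk <;> decide

lemma eq_add_of_add_eq {u t s : Fin d → ZMod 2} (h : u + t = s) : u = s + t := by
  have := congrArg (· + t) h
  rwa [add_assoc, addSelf, add_zero] at this

/-- translations, as a hom -/
def trHom (d : ℕ) : Multiplicative (Fin d → ZMod 2) →* (cubeGraph d ≃g cubeGraph d) where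
  toFun v := trAut (Multiplicative.toAdd v)
  map_one' := RelIso.ext fun x => by
    show x + 0 = x
    rw [add_zero]
  map_mul' v w := RelIso.ext fun x => by
    show x + (Multiplicative.toAdd v + Multiplicative.toAdd w) =
      x + Multiplicative.toAdd w + Multiplicative.toAdd v
    abel

/-- coordinate permutations, as a hom -/
def pHom (d : ℕ) : Equiv.Perm (Fin d) →* (cubeGraph d ≃g cubeGraph d) where
  toFun := pAut
  map_one' := RelIso.ext fun x => rfl
  map_mul' σ τ := RelIso.ext fun x => rfl

lemma compat (d : ℕ) : ∀ g : Equiv.Perm (Fin d),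
    (trHom d).comp ((permHom d g)).toMonoidHom =
      (MulAut.conj (pHom d g)).toMonoidHom.comp (trHom d) := by
  intro σ
  apply MonoidHom.ext
  intro v
  apply RelIso.ext
  intro x
  show x + pAct σ (Multiplicative.toAdd v) =
    pAct σ ((fun i => x (σ i)) + Multiplicative.toAdd v)
  rw [pAct_add]
  congr 1
  funext i
  show x i = x (σ (σ.symm i))
  rw [Equiv.apply_symm_apply]

/-- the main hom -/
def Φ (d : ℕ) :
    (Multiplicative (Fin d → ZMod 2)) ⋊[permHom d] Equiv.Perm (Fin d) →*
      (cubeGraph d ≃g cubeGraph d) :=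
  SemidirectProduct.lift (trHom d) (pHom d) (compat d)

lemma Φ_apply (p : (Multiplicative (Fin d → ZMod 2)) ⋊[permHom d] Equiv.Perm (Fin d))
    (x : Fin d → ZMod 2) :
    Φ d p x = pAct p.right x + Multiplicative.toAdd p.left := rfl

end Cube

namespace Cube

variable {d : ℕ}

lemma Φ_injective (d : ℕ) : Function.Injective (Φ d) := by
  rw [injective_iff_map_eq_one]
  intro p hp
  have happ : ∀ x : Fin d → ZMod 2, pAct p.right x + Multiplicative.toAdd p.left = x := by
    intro x
    have := congrArg (fun F : cubeGraph d ≃g cubeGraph d => F x) hp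
    simpa [Φ_apply] using this
  have hv : Multiplicative.toAdd p.left = 0 := by
    have h0 := happ 0
    have : pAct p.right (0 : Fin d → ZMod 2) = 0 := rfl
    rwa [this, zero_add] at h0
  have hσ : p.right = 1 := by
    apply Equiv.ext
    intro i
    have := happ (e i)
    rw [hv, add_zero, pAct_e] at this
    exact e_inj this
  apply SemidirectProduct.ext
  · exact hv
  · exact hσ

lemma e_apply_ne {k a : Fin d} (h : k ≠ a) : e a k = 0 := by
  rw [e_apply, if_neg h]

lemma eq_of_e_apply_one {k a : Fin d} (h : e a k = 1) : k = a := by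
  by_contra hc
  rw [e_apply_ne hc] at h
  exact one_ne_zero h.symm

lemma Φ_surjective (d : ℕ) : Function.Surjective (Φ d) := by
  intro f
  set v : Fin d → ZMod 2 := f 0 with hv
  set g : cubeGraph d ≃g cubeGraph d := trHom d (Multiplicative.ofAdd v) * f with hg
  have hgapp : ∀ x, g x = f x + v := fun x => rfl
  have hg0 : g 0 = 0 := by rw [hgapp, ← hv, addSelf]
  -- g maps basis vectors to basis vectors
  have hbasis : ∀ i : Fin d, ∃ j, g (e i) = e j := by
    intro i
    have hadj : (cubeGraph d).Adj (e i) 0 := by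
      show wt (e i + 0) = 1
      rw [add_zero]
      exact wt_eq_one_iff.mpr ⟨i, rfl⟩
    have h1 : wt (g (e i) + g 0) = 1 := g.map_rel_iff'.mpr hadj
    rw [hg0, add_zero] at h1
    exact wt_eq_one_iff.mp h1
  choose s hs using hbasis
  have hsinj : Function.Injective s := by
    intro i j hij
    have : g (e i) = g (e j) := by rw [hs, hs, hij]
    exact e_inj (g.injective this)
  have hsbij : Function.Bijective s := (Finite.injective_iff_bijective).mp hsinj
  set σ : Equiv.Perm (Fin d) := Equiv.ofBijective s hsbij with hσ
  have hσap : ∀ i, σ i = s i := fun i => rfl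
  -- main claim: g equals coordinate permutation by σ
  have key : ∀ n, ∀ x : Fin d → ZMod 2, wt x = n → g x = pAct σ x := by
    intro n
    induction n using Nat.strong_induction_on with
    | _ n ih =>
      intro x hx
      rcases Nat.lt_or_ge n 2 with h2 | h2
      · interval_cases n
        · have : x = 0 := wt_eq_zero_iff.mp hx
          subst this
          rw [hg0]; rfl
        · obtain ⟨i, rfl⟩ := wt_eq_one_iff.mp hx
          rw [hs i, pAct_e, hσap]
      · -- weight ≥ 2
        obtain ⟨i, hi, j, hj, hij⟩ := Finset.one_lt_card.mp
          (by rw [show (Finset.univ.filter (fun k => x k = 1)).card = wt x from rfl, hx]; omega)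
        simp only [Finset.mem_filter, Finset.mem_univ, true_and] at hi hj
        set y := x + e i with hy
        set z := x + e j with hz
        set w := y + e j with hw
        have hyj : y j = 1 := by rw [hy, add_e_apply_ne (Ne.symm hij)]; exact hj
        have hwty : wt y < n := hx ▸ wt_add_e_lt hi
        have hwtz : wt z < n := hx ▸ wt_add_e_lt hj
        have hwtw : wt w < n := lt_trans (wt_add_e_lt hyj) hwty
        have ihy := ih (wt y) hwty y rfl
        have ihz := ih (wt z) hwtz z rfl
        have ihw := ih (wt w) hwtw w rfl
        have hxy : (cubeGraph d).Adj x y := by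
          show wt (x + y) = 1
          rw [hy, ← add_assoc, addSelf, zero_add]
          exact wt_eq_one_iff.mpr ⟨i, rfl⟩
        have hxz : (cubeGraph d).Adj x z := by
          show wt (x + z) = 1
          rw [hz, ← add_assoc, addSelf, zero_add]
          exact wt_eq_one_iff.mpr ⟨j, rfl⟩
        have ha : wt (g x + g y) = 1 := g.map_rel_iff'.mpr hxy
        have hb : wt (g x + g z) = 1 := g.map_rel_iff'.mpr hxz
        rw [ihy] at ha
        rw [ihz] at hb
        obtain ⟨a, hA⟩ := wt_eq_one_iff.mp ha
        obtain ⟨b, hB⟩ := wt_eq_one_iff.mp hb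
        have hgxa : g x = e a + pAct σ y := eq_add_of_add_eq hA
        have hgxb : g x = e b + pAct σ z := eq_add_of_add_eq hB
        have heab : e a + e b = e (σ i) + e (σ j) := by
          have h1 : e a + pAct σ y = e b + pAct σ z := by rw [← hgxa, ← hgxb]
          have h2 := char2_rearrange h1
          have h3 : pAct σ y + pAct σ z = e (σ i) + e (σ j) := by
            rw [← pAct_add]
            have hyz : y + z = e i + e j := by
              rw [hy, hz]
              have : x + e i + (x + e j) = x + x + (e i + e j) := by abel
              rw [this, addSelf, zero_add]
            rw [hyz, pAct_add, pAct_e, pAct_e]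
          rw [← h3]
          exact h2
        have hσij : σ i ≠ σ j := fun hc => hij (σ.injective hc)
        have hval : ∀ k, e a k + e b k = e (σ i) k + e (σ j) k := fun k => congrFun heab k
        by_cases haσ : a = σ i
        · -- then b = σ j (unused) and g x = pAct σ x
          rw [hgxa, haσ, hy, pAct_add, pAct_e]
          have : e (σ i) + (pAct σ x + e (σ i)) = pAct σ x + (e (σ i) + e (σ i)) := by abel
          rw [this, addSelf, add_zero]
        · -- then b = σ i, a = σ j, contradiction
          have hbσi : b = σ i := by
            have h := hval (σ i)
            simp only [e_apply_ne (fun hc => haσ hc.symm), e_apply_self,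
              e_apply_ne hσij, zero_add, add_zero] at h
            exact (eq_of_e_apply_one h).symm
          have haσj : a = σ j := by
            have h := hval (σ j)
            simp only [hbσi, e_apply_ne (Ne.symm hσij), e_apply_self,
              zero_add, add_zero] at h
            exact (eq_of_e_apply_one h).symm
          exfalso
          have hgxw : g x = g w := by
            rw [ihw, hgxa, haσj, hw, hy]
            simp only [pAct_add, pAct_e]
            abel
          have hxw : x = w := g.injective hgxw
          have h0 : x + (e i + e j) = x + 0 := by
            rw [add_zero, ← add_assoc, ← hy, ← hw]
            exact hxw.symm
          have h1 : e i + e j = 0 := add_left_cancel h0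
          have hcon := congrFun h1 i
          simp only [Pi.add_apply, e_apply_self, e_apply_ne hij, add_zero,
            Pi.zero_apply] at hcon
          exact one_ne_zero hcon
  refine ⟨⟨Multiplicative.ofAdd v, σ⟩, ?_⟩
  apply RelIso.ext
  intro x
  rw [Φ_apply]
  show pAct σ x + v = f x
  rw [← key (wt x) x rfl]
  rw [hgapp, add_assoc, addSelf, add_zero]

end Cube


/-- The automorphism group of the hypercube graph `Q_d` is isomorphic to the
semidirect product `(ZMod 2)^d ⋊ Perm (Fin d)`, where permutations act by
permuting coordinates. -/
theorem stmt1 (d : ℕ) :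
    Nonempty ((cubeGraph d ≃g cubeGraph d) ≃*
      (Multiplicative (Fin d → ZMod 2)) ⋊[permHom d] Equiv.Perm (Fin d)) := by
  exact ⟨(MulEquiv.ofBijective (Cube.Φ d) ⟨Cube.Φ_injective d, Cube.Φ_surjective d⟩).symm⟩
end

section
/- A kernel k : {0,1}^d × {0,1}^d → ℝ is positive semidefinite and satisfies k(x + z, y + z) = k(x, y) for all x, y, z ∈ {0,1}^d if and only if there exist nonnegative reals α_T, indexed by the finite subsets T ⊆ Fin d, such that k(x, y) = Σ_{T ⊆ Fin d} α_T · w_T(x) · w_T(y) for all x, y ∈ {0,1}^d. -/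
/-- The Walsh function `w_T` on the Boolean cube `{0,1}^d`. -/
def walsh {d : ℕ} (T : Finset (Fin d)) (x : Fin d → ZMod 2) : ℝ :=
  (-1 : ℝ) ^ (T.filter (fun t => x t = 1)).card

/-- A kernel is positive semidefinite if it is symmetric and all its quadratic
forms on finite tuples are nonnegative. -/
def IsPSD {X : Type*} (k : X → X → ℝ) : Prop :=
  (∀ x y, k x y = k y x) ∧
    ∀ (m : ℕ) (x : Fin m → X) (c : Fin m → ℝ),
      0 ≤ ∑ i, ∑ j, c i * c j * k (x i) (x j)

lemma val_eq (a : ZMod 2) : a.val = if a = 1 then 1 else 0 := by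
  fin_cases a <;> rfl

lemma zone (a : ZMod 2) (h : a ≠ 0) : a = 1 := by revert a h; decide

lemma walsh_prod {d : ℕ} (T : Finset (Fin d)) (x : Fin d → ZMod 2) :
    walsh T x = ∏ t ∈ T, (-1 : ℝ) ^ (x t).val := by
  rw [walsh, Finset.prod_pow_eq_pow_sum]
  congr 1
  rw [Finset.card_filter]
  exact Finset.sum_congr rfl fun t _ => (val_eq (x t)).symm

lemma chi_add (a b : ZMod 2) : (-1:ℝ)^((a+b).val) = (-1)^a.val * (-1)^b.val := by
  obtain rfl | rfl : a = 0 ∨ a = 1 := (by revert a; decide) <;>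
  obtain rfl | rfl : b = 0 ∨ b = 1 := (by revert b; decide) <;>
    norm_num [show ZMod.val (2:ZMod 2) = 0 from rfl, show ZMod.val (1:ZMod 2) = 1 from rfl,
      show ZMod.val (0:ZMod 2) = 0 from rfl]

lemma walsh_add {d : ℕ} (T : Finset (Fin d)) (x y : Fin d → ZMod 2) :
    walsh T (x + y) = walsh T x * walsh T y := by
  simp only [walsh_prod, ← Finset.prod_mul_distrib]
  exact Finset.prod_congr rfl fun t _ => chi_add (x t) (y t)

lemma walsh_sq {d : ℕ} (T : Finset (Fin d)) (x : Fin d → ZMod 2) :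
    walsh T x * walsh T x = 1 := by
  rw [walsh, ← mul_pow]; norm_num

lemma walsh_sum {d : ℕ} (s : Fin d → ZMod 2) :
    ∑ T : Finset (Fin d), walsh T s = if s = 0 then (2:ℝ)^d else 0 := by
  have h : ∑ T : Finset (Fin d), walsh T s
      = ∏ t : Fin d, ((-1:ℝ)^(s t).val + 1) := by
    rw [Finset.prod_add, ← Finset.powerset_univ]
    refine (Finset.sum_congr rfl fun T _ => ?_).symm
    rw [walsh_prod]
    simp
  rw [h]
  split_ifs with hs
  · subst hs; norm_num
  · obtain ⟨t, ht⟩ := Function.ne_iff.mp hs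
    refine Finset.prod_eq_zero (Finset.mem_univ t) ?_
    have h1 : s t = 1 := zone _ (by simpa using ht)
    rw [h1, show ZMod.val (1:ZMod 2) = 1 from rfl]; norm_num

lemma self_add {d : ℕ} (y : Fin d → ZMod 2) : y + y = 0 :=
  funext fun i => CharTwo.add_self_eq_zero (y i)

lemma card_cube (d : ℕ) : Fintype.card (Fin d → ZMod 2) = 2 ^ d := by
  simp [Fintype.card_fun]

/-- A kernel on the Boolean cube is positive semidefinite and translation
invariant iff it admits a Walsh expansion with nonnegative coefficients. -/
theorem stmt2 (d : ℕ) (k : (Fin d → ZMod 2) → (Fin d → ZMod 2) → ℝ) :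
    (IsPSD k ∧ ∀ x y z : Fin d → ZMod 2, k (x + z) (y + z) = k x y) ↔
      ∃ α : Finset (Fin d) → ℝ, (∀ T, 0 ≤ α T) ∧
        ∀ x y : Fin d → ZMod 2,
          k x y = ∑ T : Finset (Fin d), α T * walsh T x * walsh T y := by
  constructor
  · rintro ⟨⟨hsym, hpsd⟩, hinv⟩
    have hkf : ∀ x y : Fin d → ZMod 2, k x y = k (x + y) 0 := by
      intro x y
      have h := hinv x y y
      rw [self_add] at h
      exact h.symm
    -- nonnegativity of Fourier coefficients
    have hq : ∀ T : Finset (Fin d), 0 ≤ ∑ u, k u 0 * walsh T u := by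
      intro T
      set e := (Fintype.equivFin (Fin d → ZMod 2)).symm with he
      have h0 := hpsd (Fintype.card (Fin d → ZMod 2)) e (fun i => walsh T (e i))
      have h1 : (∑ i, ∑ j, walsh T (e i) * walsh T (e j) * k (e i) (e j))
          = ∑ u, ∑ v, walsh T u * walsh T v * k u v := by
        rw [← Equiv.sum_comp e (fun u => ∑ v, walsh T u * walsh T v * k u v)]
        exact Finset.sum_congr rfl fun i _ =>
          Equiv.sum_comp e (fun v => walsh T (e i) * walsh T v * k (e i) v)
      have inner : ∀ u, (∑ v, walsh T u * walsh T v * k u v) = ∑ w, k w 0 * walsh T w := by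
        intro u
        rw [← Equiv.sum_comp (Equiv.addLeft u) (fun v => walsh T u * walsh T v * k u v)]
        refine Finset.sum_congr rfl fun w _ => ?_
        have e1 : k u (u + w) = k w 0 := by
          rw [hkf u (u + w), show u + (u + w) = w by rw [← add_assoc, self_add, zero_add]]
        show walsh T u * walsh T (u + w) * k u (u + w) = k w 0 * walsh T w
        rw [walsh_add, e1]
        have hsq := walsh_sq T u
        calc walsh T u * (walsh T u * walsh T w) * k w 0
            = (walsh T u * walsh T u) * (k w 0 * walsh T w) := by ring
          _ = k w 0 * walsh T w := by rw [hsq, one_mul]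
      have h2 : (∑ u, ∑ v, walsh T u * walsh T v * k u v)
          = (2:ℝ)^d * ∑ u, k u 0 * walsh T u := by
        rw [Finset.sum_congr rfl fun u _ => inner u, Finset.sum_const, Finset.card_univ,
          card_cube, nsmul_eq_mul]
        push_cast
        ring
      rw [h1, h2] at h0
      nlinarith [pow_pos (by norm_num : (0:ℝ) < 2) d]
    refine ⟨fun T => (∑ u, k u 0 * walsh T u) / 2^d, fun T => div_nonneg (hq T) (by positivity), ?_⟩
    have haddz : ∀ u s : Fin d → ZMod 2, u + s = 0 ↔ u = s := by
      intro u s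
      constructor
      · intro h
        have : u + s + s = 0 + s := by rw [h]
        rwa [add_assoc, self_add, add_zero, zero_add] at this
      · rintro rfl; exact self_add u
    have hinvert : ∀ s : Fin d → ZMod 2,
        (∑ T : Finset (Fin d), (∑ u, k u 0 * walsh T u) / 2^d * walsh T s) = k s 0 := by
      intro s
      have step1 : ∀ T : Finset (Fin d),
          (∑ u, k u 0 * walsh T u) / 2^d * walsh T s
            = ∑ u, k u 0 / 2^d * walsh T (u + s) := by
        intro T
        rw [div_mul_eq_mul_div, Finset.sum_mul, Finset.sum_div]
        exact Finset.sum_congr rfl fun u _ => by rw [walsh_add]; ring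
      rw [Finset.sum_congr rfl fun T _ => step1 T, Finset.sum_comm]
      have step2 : ∀ u : Fin d → ZMod 2,
          (∑ T : Finset (Fin d), k u 0 / 2^d * walsh T (u + s))
            = if u = s then k u 0 else 0 := by
        intro u
        rw [← Finset.mul_sum, walsh_sum, if_congr (haddz u s) rfl rfl]
        split_ifs with h
        · rw [div_mul_cancel₀]
          positivity
        · rw [mul_zero]
      rw [Finset.sum_congr rfl fun u _ => step2 u, Finset.sum_ite_eq' Finset.univ s]
      simp
    intro x y
    rw [hkf x y, ← hinvert (x + y)]
    exact Finset.sum_congr rfl fun T _ => by rw [walsh_add]; ring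
  · rintro ⟨α, hα, hk⟩
    refine ⟨⟨fun x y => ?_, fun m x c => ?_⟩, fun x y z => ?_⟩
    · rw [hk, hk]
      exact Finset.sum_congr rfl fun T _ => by ring
    · have key : (∑ i, ∑ j, c i * c j * k (x i) (x j))
          = ∑ T : Finset (Fin d), α T * (∑ i, c i * walsh T (x i))^2 := by
        calc (∑ i, ∑ j, c i * c j * k (x i) (x j))
            = ∑ i, ∑ j, ∑ T : Finset (Fin d),
                α T * (c i * walsh T (x i)) * (c j * walsh T (x j)) := by
              refine Finset.sum_congr rfl fun i _ => Finset.sum_congr rfl fun j _ => ?_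
              rw [hk, Finset.mul_sum]
              exact Finset.sum_congr rfl fun T _ => by ring
          _ = ∑ i, ∑ T : Finset (Fin d), ∑ j,
                α T * (c i * walsh T (x i)) * (c j * walsh T (x j)) :=
              Finset.sum_congr rfl fun i _ => Finset.sum_comm
          _ = ∑ T : Finset (Fin d), ∑ i, ∑ j,
                α T * (c i * walsh T (x i)) * (c j * walsh T (x j)) := Finset.sum_comm
          _ = ∑ T : Finset (Fin d), α T * (∑ i, c i * walsh T (x i))^2 := by
              refine Finset.sum_congr rfl fun T _ => ?_
              rw [sq, Finset.sum_mul_sum, Finset.mul_sum]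
              exact Finset.sum_congr rfl fun i _ => by
                rw [Finset.mul_sum]
                exact Finset.sum_congr rfl fun j _ => by ring
      rw [key]
      exact Finset.sum_nonneg fun T _ => mul_nonneg (hα T) (sq_nonneg _)
    · rw [hk, hk]
      refine Finset.sum_congr rfl fun T _ => ?_
      rw [walsh_add, walsh_add]
      have hsq := walsh_sq T z
      calc α T * (walsh T x * walsh T z) * (walsh T y * walsh T z)
          = α T * walsh T x * walsh T y * (walsh T z * walsh T z) := by ring
        _ = α T * walsh T x * walsh T y := by rw [hsq, mul_one]
end
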